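/- Suppose χ : [0,∞) → [0,∞) is continuous, ψ : ℝ → [0,∞) is differentiable with ψ' > 0, ξ : ℝ → (0,∞) is differentiable, and for every t > 0 the function s ↦ (1/ξ²(s))·∫_{ψ(s)}^{ψ(s+t)} χ(u) du is constant in s (the INOT condition), and moreover for some s the limit lim_{t→∞} (1/ξ²(s+t))·∫_{ψ(s)}^{ψ(s+t)} χ(u) du exists, is finite and positive (the MEPA condition), and ξ(s₀) = 1 for some s₀. Then there exist a > 0 and b > 0 with ξ²(s) = exp(b·(s−s₀)) for all s and χ(ψ(s))·ψ'(s) = a·b·exp(b·s) for all s. -/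

import Mathlib

/-- An additive differentiable function on ℝ is linear. -/
lemma additive_differentiable_linear (L : ℝ → ℝ) (hL : Differentiable ℝ L)
    (hadd : ∀ x y, L (x + y) = L x + L y) : ∀ x, L x = deriv L 0 * x := by
  have hL0 : L 0 = 0 := by have := hadd 0 0; simpa using this
  have hderiv : ∀ x, deriv L x = deriv L 0 := by
    intro x
    have hb : HasDerivAt (fun h : ℝ => x + h) 1 0 := by
      simpa using (hasDerivAt_id (0:ℝ)).const_add x
    have hx : HasDerivAt L (deriv L x) (x + 0) := by simpa using (hL x).hasDerivAt
    have h1 : HasDerivAt (fun h : ℝ => L (x + h)) (deriv L x * 1) 0 := hx.comp 0 hb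
    have h2 : HasDerivAt (fun h : ℝ => L x + L h) (deriv L 0) 0 :=
      ((hL 0).hasDerivAt).const_add (L x)
    have heq : (fun h : ℝ => L (x + h)) = fun h : ℝ => L x + L h := funext fun h => hadd x h
    rw [heq] at h1
    have := h1.unique h2
    linarith
  intro x
  have hconst : ∀ y : ℝ, L y - deriv L 0 * y = L 0 - deriv L 0 * 0 := by
    intro y
    have hd : ∀ z : ℝ, HasDerivAt (fun y => L y - deriv L 0 * y) (deriv L z - deriv L 0 * 1) z :=
      fun z => (hL z).hasDerivAt.sub ((hasDerivAt_id z).const_mul _)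
    have hdiff : Differentiable ℝ (fun y => L y - deriv L 0 * y) :=
      fun z => (hd z).differentiableAt
    have hz : ∀ z, deriv (fun y => L y - deriv L 0 * y) z = 0 := by
      intro z
      rw [(hd z).deriv, hderiv z]
      ring
    have := is_const_of_deriv_eq_zero hdiff hz y 0
    linarith [this]
  have := hconst x
  rw [hL0] at this
  linarith

theorem stmt_10 (χ ψ ξ : ℝ → ℝ)
    (hχc : Continuous χ) (hχnn : ∀ u, 0 ≤ u → 0 ≤ χ u)
    (hψnn : ∀ s, 0 ≤ ψ s) (hψ : Differentiable ℝ ψ) (hψ' : ∀ s, 0 < deriv ψ s)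
    (hξ : Differentiable ℝ ξ) (hξpos : ∀ s, 0 < ξ s)
    (s₀ : ℝ) (hnorm : ξ s₀ = 1)
    (hINOT : ∀ t : ℝ, 0 < t → ∀ s₁ s₂ : ℝ,
      (1 / (ξ s₁) ^ 2) * ∫ u in (ψ s₁)..(ψ (s₁ + t)), χ u
        = (1 / (ξ s₂) ^ 2) * ∫ u in (ψ s₂)..(ψ (s₂ + t)), χ u)
    (hMEPA : ∃ s M : ℝ, 0 < M ∧
      Filter.Tendsto (fun t : ℝ => (1 / (ξ (s + t)) ^ 2) * ∫ u in (ψ s)..(ψ (s + t)), χ u)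
        Filter.atTop (nhds M)) :
    ∃ a b : ℝ, 0 < a ∧ 0 < b ∧
      (∀ s : ℝ, (ξ s) ^ 2 = Real.exp (b * (s - s₀))) ∧
      (∀ s : ℝ, χ (ψ s) * deriv ψ s = a * b * Real.exp (b * s)) := by
  classical
  set Φ : ℝ → ℝ := fun s => (ξ s) ^ 2 with hΦdef
  have hΦpos : ∀ s, 0 < Φ s := fun s => pow_pos (hξpos s) 2
  have hΦdiff : Differentiable ℝ Φ := hξ.pow 2
  have hΦ0 : Φ s₀ = 1 := by simp [hΦdef, hnorm]
  have hψmono : StrictMono ψ := strictMono_of_deriv_pos hψ'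
  have hInt : ∀ a b : ℝ, IntervalIntegrable χ MeasureTheory.volume a b :=
    fun a b => hχc.intervalIntegrable a b
  set g : ℝ → ℝ := fun t => ∫ u in (ψ s₀)..(ψ (s₀ + t)), χ u with hgdef
  -- Step 1: the INOT condition in product form
  have hI : ∀ t, 0 < t → ∀ s, (∫ u in (ψ s)..(ψ (s + t)), χ u) = Φ s * g t := by
    intro t ht s
    have h := hINOT t ht s s₀
    rw [hnorm] at h
    have hne : (ξ s) ^ 2 ≠ 0 := ne_of_gt (hΦpos s)
    show (∫ u in (ψ s)..(ψ (s + t)), χ u) = (ξ s) ^ 2 * ∫ u in (ψ s₀)..(ψ (s₀ + t)), χ u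
    field_simp at h
    rw [div_eq_iff hne] at h
    linarith
  -- Step 2: additivity
  have hsplit : ∀ s t u : ℝ, 0 < t → 0 < u →
      Φ s * g (t + u) = Φ s * g t + Φ (s + t) * g u := by
    intro s t u ht hu
    have e1 := hI (t + u) (by linarith) s
    have e2 := hI t ht s
    have e3 := hI u hu (s + t)
    have hadd := intervalIntegral.integral_add_adjacent_intervals
      (hInt (ψ s) (ψ (s + t))) (hInt (ψ (s + t)) (ψ (s + t + u)))
    rw [show s + (t + u) = s + t + u from by ring] at e1
    linarith
  -- Step 3: g nonneg
  have hgnn : ∀ t, 0 < t → 0 ≤ g t := by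
    intro t ht
    apply intervalIntegral.integral_nonneg (le_of_lt (hψmono (by linarith : s₀ < s₀ + t)))
    intro u hu
    exact hχnn u (le_trans (hψnn s₀) hu.1)
  -- MEPA
  obtain ⟨sM, M, hM, hlim⟩ := hMEPA
  have hlim' : Filter.Tendsto (fun t => Φ sM / Φ (sM + t) * g t) Filter.atTop (nhds M) := by
    apply hlim.congr'
    filter_upwards [Filter.eventually_gt_atTop 0] with t ht
    rw [hI t ht sM]
    field_simp
    rfl
  -- Step 5: some t₁ with g t₁ > 0
  obtain ⟨t₁, ht₁pos, hgt₁⟩ : ∃ t₁, 0 < t₁ ∧ 0 < g t₁ := by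
    have hev : ∀ᶠ t in Filter.atTop, 0 < Φ sM / Φ (sM + t) * g t :=
      hlim'.eventually (eventually_gt_nhds hM)
    obtain ⟨t₁, h1, h2⟩ := (hev.and (Filter.eventually_gt_atTop 0)).exists
    refine ⟨t₁, h2, ?_⟩
    by_contra h
    push_neg at h
    have hr : 0 < Φ sM / Φ (sM + t₁) := div_pos (hΦpos _) (hΦpos _)
    nlinarith
  -- Step 6: multiplicativity of Φ
  have hmul : ∀ s t : ℝ, 0 < t → Φ (s + t) = Φ s * Φ (s₀ + t) := by
    intro s t ht
    have e1 := hsplit s t t₁ ht ht₁pos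
    have e2 := hsplit s₀ t t₁ ht ht₁pos
    rw [hΦ0] at e2
    have key : (Φ (s + t) - Φ s * Φ (s₀ + t)) * g t₁ = 0 := by
      linear_combination Φ s * e2 - e1
    have := mul_eq_zero.1 key
    rcases this with h | h
    · linarith
    · exact absurd h (ne_of_gt hgt₁)
  -- Step 7: ρ multiplicative
  set ρ : ℝ → ℝ := fun x => Φ (s₀ + x) with hρdef
  have hρpos : ∀ x, 0 < ρ x := fun x => hΦpos _
  have hρ0 : ρ 0 = 1 := by simp [hρdef, hΦ0]
  have hρmulp : ∀ x t : ℝ, 0 < t → ρ (x + t) = ρ x * ρ t := by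
    intro x t ht
    have := hmul (s₀ + x) t ht
    simpa [hρdef, add_assoc] using this
  have hρmul : ∀ x y : ℝ, ρ (x + y) = ρ x * ρ y := by
    intro x y
    rcases lt_trichotomy y 0 with hy | hy | hy
    · have h1 : ρ ((x + y) + (-y)) = ρ (x + y) * ρ (-y) := hρmulp _ _ (by linarith)
      have h2 : ρ (y + (-y)) = ρ y * ρ (-y) := hρmulp _ _ (by linarith)
      rw [show (x + y) + (-y) = x from by ring] at h1
      rw [show y + (-y) = (0:ℝ) from by ring, hρ0] at h2
      linear_combination ρ (x + y) * h2 - ρ y * h1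
    · rw [hy, add_zero, hρ0, mul_one]
    · exact hρmulp x y hy
  -- Step 8: L = log ρ is linear
  set L : ℝ → ℝ := fun x => Real.log (ρ x) with hLdef
  have hLdiff : Differentiable ℝ L := by
    apply Differentiable.log
    · exact hΦdiff.comp ((differentiable_id.const_add s₀))
    · exact fun x => ne_of_gt (hρpos x)
  have hLadd : ∀ x y, L (x + y) = L x + L y := by
    intro x y
    simp only [hLdef, hρmul x y]
    exact Real.log_mul (ne_of_gt (hρpos x)) (ne_of_gt (hρpos y))
  set b : ℝ := deriv L 0 with hbdef
  have hLlin : ∀ x, L x = b * x := additive_differentiable_linear L hLdiff hLadd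
  have hρexp : ∀ x, ρ x = Real.exp (b * x) := by
    intro x
    have := hLlin x
    rw [hLdef] at this
    simp only at this
    rw [← Real.exp_log (hρpos x), this]
  have hΦexp : ∀ s, Φ s = Real.exp (b * (s - s₀)) := by
    intro s
    have := hρexp (s - s₀)
    simpa [hρdef, show s₀ + (s - s₀) = s from by ring] using this
  -- rewrite the limit
  have hlim2 : Filter.Tendsto (fun t => Real.exp (-(b * t)) * g t) Filter.atTop (nhds M) := by
    apply hlim'.congr
    intro t
    rw [hΦexp sM, hΦexp (sM + t)]
    rw [← Real.exp_sub]
    congr 1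
    ring
  -- g additivity at s₀
  have hgadd : ∀ t u : ℝ, 0 < t → 0 < u → g (t + u) = g t + Real.exp (b * t) * g u := by
    intro t u ht hu
    have := hsplit s₀ t u ht hu
    rw [hΦ0, hΦexp (s₀ + t)] at this
    have h2 : b * (s₀ + t - s₀) = b * t := by ring
    rw [h2] at this
    linarith
  -- Step 9: b > 0
  have hbpos : 0 < b := by
    rcases lt_trichotomy b 0 with hb | hb | hb
    · exfalso
      -- g → 0 but g is monotone and g t₁ > 0
      have hg0 : Filter.Tendsto g Filter.atTop (nhds 0) := by
        have h1 : Filter.Tendsto (fun t => Real.exp (b * t)) Filter.atTop (nhds 0) := by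
          have := Real.tendsto_exp_atBot
          apply this.comp
          exact Filter.tendsto_id.const_mul_atTop_of_neg hb
        have h2 := h1.mul hlim2
        rw [zero_mul] at h2
        apply h2.congr
        intro t
        rw [← mul_assoc, ← Real.exp_add]
        simp
      have hmono : ∀ᶠ t in Filter.atTop, g t₁ ≤ g t := by
        filter_upwards [Filter.eventually_gt_atTop t₁] with t ht
        have := hgadd t₁ (t - t₁) ht₁pos (by linarith)
        rw [show t₁ + (t - t₁) = t from by ring] at this
        have := hgnn (t - t₁) (by linarith)
        nlinarith [Real.exp_pos (b * t₁)]
      have := ge_of_tendsto hg0 hmono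
      linarith
    · exfalso
      -- b = 0: g additive, g → M and g(2t) → M gives M = 2M
      have h1 : Filter.Tendsto g Filter.atTop (nhds M) := by
        apply hlim2.congr
        intro t
        rw [hb]
        simp
      have h2 : Filter.Tendsto (fun t => g (2 * t)) Filter.atTop (nhds M) := by
        apply h1.comp
        exact Filter.tendsto_id.const_mul_atTop (by norm_num : (0:ℝ) < 2)
      have h3 : Filter.Tendsto (fun t => g (2 * t)) Filter.atTop (nhds (2 * M)) := by
        have := h1.const_mul 2
        apply this.congr'
        filter_upwards [Filter.eventually_gt_atTop 0] with t ht
        have := hgadd t t ht ht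
        rw [hb] at this
        simp at this
        rw [show 2 * t = t + t from by ring, this]
        ring
      have := tendsto_nhds_unique h2 h3
      linarith
    · exact hb
  -- Step 10: formula for g
  set a₀ : ℝ := g t₁ / (Real.exp (b * t₁) - 1) with ha₀def
  have hbt₁ : 0 < b * t₁ := mul_pos hbpos ht₁pos
  have hexpgt : 1 < Real.exp (b * t₁) := by
    rw [← Real.exp_zero]
    exact Real.exp_lt_exp.2 hbt₁
  have ha₀pos : 0 < a₀ := div_pos hgt₁ (by linarith)
  have hg : ∀ t, 0 < t → g t = a₀ * (Real.exp (b * t) - 1) := by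
    intro t ht
    have h1 := hgadd t t₁ ht ht₁pos
    have h2 := hgadd t₁ t ht₁pos ht
    rw [show t₁ + t = t + t₁ from by ring] at h2
    -- g t * (e^{bt₁} - 1) = g t₁ * (e^{bt} - 1)
    have key : g t * (Real.exp (b * t₁) - 1) = g t₁ * (Real.exp (b * t) - 1) := by
      linear_combination h1 - h2
    have hne : Real.exp (b * t₁) - 1 ≠ 0 := ne_of_gt (by linarith)
    rw [ha₀def, div_mul_eq_mul_div, eq_div_iff hne]
    linarith
  -- Step 11: the cumulative integral
  have hH : ∀ s : ℝ, (∫ u in (ψ s₀)..(ψ s), χ u) = a₀ * (Real.exp (b * (s - s₀)) - 1) := by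
    intro s
    rcases lt_trichotomy s s₀ with hs | hs | hs
    · have e1 := hI (s₀ - s) (by linarith) s
      rw [show s + (s₀ - s) = s₀ from by ring] at e1
      have e2 : (∫ u in (ψ s₀)..(ψ s), χ u) = -∫ u in (ψ s)..(ψ s₀), χ u :=
        (intervalIntegral.integral_symm _ _)
      rw [e2, e1, hΦexp s, hg (s₀ - s) (by linarith)]
      have hexp1 : Real.exp (b * (s - s₀)) * Real.exp (b * (s₀ - s)) = 1 := by
        rw [← Real.exp_add]
        rw [show b * (s - s₀) + b * (s₀ - s) = 0 from by ring, Real.exp_zero]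
      linear_combination (-a₀) * hexp1
    · rw [hs]; simp
    · have h : (∫ u in (ψ s₀)..(ψ (s₀ + (s - s₀))), χ u) = a₀ * (Real.exp (b * (s - s₀)) - 1) :=
        hg (s - s₀) (by linarith)
      rw [show s₀ + (s - s₀) = s from by ring] at h
      exact h
  -- Step 12: differentiate
  refine ⟨a₀ * Real.exp (-(b * s₀)), b, mul_pos ha₀pos (Real.exp_pos _), hbpos, ?_, ?_⟩
  · intro s; exact hΦexp s
  · intro s
    have hG : HasDerivAt (fun x => ∫ u in (ψ s₀)..x, χ u) (χ (ψ s)) (ψ s) := by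
      exact intervalIntegral.integral_hasDerivAt_right (hInt _ _)
        hχc.stronglyMeasurable.stronglyMeasurableAtFilter hχc.continuousAt
    have hF : HasDerivAt (fun s => ∫ u in (ψ s₀)..(ψ s), χ u) (χ (ψ s) * deriv ψ s) s := by
      have := hG.comp s (hψ s).hasDerivAt
      exact this
    have hRHS : HasDerivAt (fun s => a₀ * (Real.exp (b * (s - s₀)) - 1))
        (a₀ * (Real.exp (b * (s - s₀)) * b)) s := by
      have h1 : HasDerivAt (fun s : ℝ => b * (s - s₀)) b s := by
        simpa using ((hasDerivAt_id s).sub_const s₀).const_mul b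
      have h2 := h1.exp
      have h3 := (h2.sub_const 1).const_mul a₀
      simpa [mul_comm] using h3
    have heq : (fun s => ∫ u in (ψ s₀)..(ψ s), χ u)
        = fun s => a₀ * (Real.exp (b * (s - s₀)) - 1) := funext hH
    rw [heq] at hF
    have := hF.unique hRHS
    rw [this]
    rw [show b * (s - s₀) = -(b * s₀) + b * s from by ring, Real.exp_add]
    ring
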